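/- With W as in the Beltrami flow construction (W(ξ) = Σ_{|k|=λ̄} a_k B_k e^{ik·ξ}, with a_{-k} = conj(a_k), B_k = A_k + i(k/|k|)×A_k, A_k·k=0, |A_k|=1/√2, A_{-k}=A_k), the average of W ⊗ W over the torus equals (1/2) Σ_{|k|=λ̄} |a_k|² (Id − (k/|k|) ⊗ (k/|k|)). -/

import Mathlib

open MeasureTheory Real
noncomputable section

abbrev X3 := Fin 3 → ℝ

/-- `2π`-periodicity in each coordinate. -/
def TPeriodic {E : Type*} (f : X3 → E) : Prop :=
  ∀ (x : X3) (k : Fin 3 → ℤ), f (x + fun i => 2 * π * (k i : ℝ)) = f x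

/-- A fundamental domain of the torus. -/
def cube : Set X3 := Set.Icc 0 (fun _ => 2 * π)

/-- `i`-th partial derivative. -/
def pd {E : Type*} [NormedAddCommGroup E] [NormedSpace ℝ E]
    (i : Fin 3) (f : X3 → E) (x : X3) : E :=
  fderiv ℝ f x (Pi.single i 1)

def dotR (a b : X3) : ℝ := ∑ i, a i * b i

def crossR (a b : X3) : X3 :=
  ![a 1 * b 2 - a 2 * b 1, a 2 * b 0 - a 0 * b 2, a 0 * b 1 - a 1 * b 0]

def dotC (a b : Fin 3 → ℂ) : ℂ := ∑ i, a i * b i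

/-- sup norm. -/
def C0 {E : Type*} [NormedAddCommGroup E] (f : X3 → E) : ℝ := ⨆ x, ‖f x‖

/-- Hölder seminorm of integer order `m`. -/
def semiNat {E : Type*} [NormedAddCommGroup E] [NormedSpace ℝ E]
    (m : ℕ) (f : X3 → E) : ℝ :=
  ⨆ x, ‖iteratedFDeriv ℝ m f x‖

open Classical in
def Hsemi {E : Type*} [NormedAddCommGroup E] [NormedSpace ℝ E]
    (s : ℝ) (f : X3 → E) : ℝ :=
  if s = (⌊s⌋₊ : ℝ) then semiNat ⌊s⌋₊ f
  else ⨆ x, ⨆ y,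
    ‖iteratedFDeriv ℝ ⌊s⌋₊ f x - iteratedFDeriv ℝ ⌊s⌋₊ f y‖ / ‖x - y‖ ^ (s - (⌊s⌋₊ : ℝ))

open Classical in
def Hnorm {E : Type*} [NormedAddCommGroup E] [NormedSpace ℝ E]
    (r : ℝ) (f : X3 → E) : ℝ :=
  (∑ j ∈ Finset.range (⌊r⌋₊ + 1), semiNat j f) +
    (if r = (⌊r⌋₊ : ℝ) then 0 else Hsemi r f)


/- ### auxiliary lemmas -/

set_option maxHeartbeats 1000000 in
lemma tensor_id (lam : ℝ) (hl : lam ≠ 0) (A K : X3)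
    (h1 : dotR A K = 0) (h2 : dotR A A = 1/2) (h3 : dotR K K = lam^2) (i j : Fin 3) :
    A i * A j + crossR (fun m => K m / lam) A i * crossR (fun m => K m / lam) A j
      = (1/2) * ((if i = j then 1 else 0) - K i * K j / lam^2) := by
  simp only [dotR, Fin.sum_univ_three] at h1 h2 h3
  have hl2 : lam^2 ≠ 0 := pow_ne_zero _ hl
  fin_cases i <;> fin_cases j <;> simp [crossR, Fin.isValue] <;> field_simp
  · linear_combination (2*(K 1^2+K 2^2))*h2 + (2*(1/2 - A 0^2))*h3
      - (2*(K 1*A 1+K 2*A 2-K 0*A 0))*h1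
  · linear_combination (-2*(K 0*K 1))*h2 + (2*(K 1*A 0+K 0*A 1))*h1
      - (2*(A 0*A 1))*h3
  · linear_combination (-2*(K 2*K 0))*h2 + (2*(K 0*A 2+K 2*A 0))*h1
      - (2*(A 2*A 0))*h3
  · linear_combination (-2*(K 0*K 1))*h2 + (2*(K 1*A 0+K 0*A 1))*h1
      - (2*(A 0*A 1))*h3
  · linear_combination (2*(K 2^2+K 0^2))*h2 + (2*(1/2 - A 1^2))*h3
      - (2*(K 2*A 2+K 0*A 0-K 1*A 1))*h1
  · linear_combination (-2*(K 1*K 2))*h2 + (2*(K 2*A 1+K 1*A 2))*h1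
      - (2*(A 1*A 2))*h3
  · linear_combination (-2*(K 2*K 0))*h2 + (2*(K 0*A 2+K 2*A 0))*h1
      - (2*(A 2*A 0))*h3
  · linear_combination (-2*(K 1*K 2))*h2 + (2*(K 2*A 1+K 1*A 2))*h1
      - (2*(A 1*A 2))*h3
  · linear_combination (2*(K 0^2+K 1^2))*h2 + (2*(1/2 - A 2^2))*h3
      - (2*(K 0*A 0+K 1*A 1-K 2*A 2))*h1

lemma int_exp_single (n : ℤ) :
    ∫ x in Set.Icc (0:ℝ) (2*π), Complex.exp (Complex.I * n * x)
      = if n = 0 then ((2*π : ℝ) : ℂ) else 0 := by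
  have hle : (0:ℝ) ≤ 2*π := by positivity
  rw [MeasureTheory.integral_Icc_eq_integral_Ioc,
    ← intervalIntegral.integral_of_le hle]
  by_cases h : n = 0
  · simp [h]
  · simp only [h, if_false]
    have hc : (Complex.I * n : ℂ) ≠ 0 := by
      simp [Complex.I_ne_zero, Complex.ext_iff, h]
    have := integral_exp_mul_complex (a := 0) (b := 2*π) hc
    simp only [mul_assoc] at this ⊢
    rw [this]
    have h1 : Complex.exp (Complex.I * (n * (2*π : ℝ))) = 1 := by
      have := Complex.exp_int_mul_two_pi_mul_I n
      rw [← this]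
      push_cast
      ring_nf
    rw [show ((0:ℝ):ℂ) = 0 by norm_num] at *
    push_cast at h1 ⊢
    simp [h1]

lemma cube_exp_int (k : Fin 3 → ℤ) :
    ∫ ξ in cube, Complex.exp (Complex.I * ∑ j, (k j : ℂ) * (ξ j : ℂ))
      = if k = 0 then ((2*π : ℝ) : ℂ)^3 else 0 := by
  have hfac : ∀ ξ : X3, Complex.exp (Complex.I * ∑ j, (k j : ℂ) * (ξ j : ℂ))
      = ∏ j, Complex.exp (Complex.I * (k j) * (ξ j)) := by
    intro ξ
    rw [← Complex.exp_sum, Finset.mul_sum]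
    ring_nf
  simp_rw [hfac]
  have hcube : cube = Set.pi Set.univ (fun _ : Fin 3 => Set.Icc (0:ℝ) (2*π)) := by
    rw [Set.pi_univ_Icc]; rfl
  rw [hcube, ← MeasureTheory.integral_indicator (MeasurableSet.univ_pi fun _ => measurableSet_Icc)]
  have hind : (Set.pi Set.univ (fun _ : Fin 3 => Set.Icc (0:ℝ) (2*π))).indicator
      (fun ξ : X3 => ∏ j, Complex.exp (Complex.I * (k j) * (ξ j)))
      = fun ξ : X3 => ∏ j, (Set.Icc (0:ℝ) (2*π)).indicator
          (fun x => Complex.exp (Complex.I * (k j) * x)) (ξ j) := by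
    funext ξ
    by_cases h : ξ ∈ Set.pi Set.univ (fun _ : Fin 3 => Set.Icc (0:ℝ) (2*π))
    · rw [Set.indicator_of_mem h]
      refine Finset.prod_congr rfl fun j _ => ?_
      rw [Set.indicator_of_mem (h j (Set.mem_univ j))]
    · rw [Set.indicator_of_notMem h]
      rw [Set.mem_univ_pi] at h
      push_neg at h
      obtain ⟨j, hj⟩ := h
      exact (Finset.prod_eq_zero (Finset.mem_univ j) (Set.indicator_of_notMem hj _)).symm
  rw [hind]
  beta_reduce
  rw [MeasureTheory.volume_pi]
  rw [MeasureTheory.integral_fintype_prod_eq_prod (ι := Fin 3)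
    (f := fun j x => (Set.Icc (0:ℝ) (2*π)).indicator
      (fun x => Complex.exp (Complex.I * (k j) * x)) x)]
  simp_rw [MeasureTheory.integral_indicator measurableSet_Icc, int_exp_single]
  by_cases h : k = 0
  · simp [h, pow_succ]
  · have : ∃ j, k j ≠ 0 := by
      by_contra hc; push_neg at hc; exact h (funext hc)
    obtain ⟨j, hj⟩ := this
    rw [if_neg h]
    exact Finset.prod_eq_zero (Finset.mem_univ j) (by simp [hj])

/-- the average over the torus of `W ⊗ W` equals
`(1/2) Σ_{|k|=λ̄} |a_k|² (Id − (k/|k|) ⊗ (k/|k|))`. -/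
theorem beltrami_average (lam : ℝ) (hlam : 1 ≤ lam)
    (Λ : Finset (Fin 3 → ℤ))
    (hΛlen : ∀ k ∈ Λ, (∑ i, ((k i : ℝ)) ^ 2) = lam ^ 2)
    (hΛsym : ∀ k ∈ Λ, -k ∈ Λ)
    (A : (Fin 3 → ℤ) → X3)
    (hAk : ∀ k ∈ Λ, dotR (A k) (fun i => (k i : ℝ)) = 0)
    (hAn : ∀ k ∈ Λ, dotR (A k) (A k) = 1 / 2)
    (hAsym : ∀ k ∈ Λ, A (-k) = A k)
    (a : (Fin 3 → ℤ) → ℂ)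
    (ha : ∀ k ∈ Λ, (starRingEnd ℂ) (a k) = a (-k))
    (B : (Fin 3 → ℤ) → Fin 3 → ℂ)
    (hB : ∀ k i, B k i = ((A k i : ℝ) : ℂ) +
      Complex.I * ((crossR (fun j => (k j : ℝ) / lam) (A k)) i : ℂ))
    (W : X3 → Fin 3 → ℂ)
    (hW : ∀ ξ i, W ξ i = ∑ k ∈ Λ,
      a k * B k i * Complex.exp (Complex.I * (∑ j, (k j : ℂ) * (ξ j : ℂ)))) :
    ∀ i j, ((2 * π) ^ 3 : ℂ)⁻¹ * (∫ ξ in cube, W ξ i * W ξ j) =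
      (1 / 2 : ℂ) * ∑ k ∈ Λ, ((‖a k‖) ^ 2 : ℂ) *
        ((if i = j then (1 : ℂ) else 0) - ((k i : ℂ) * (k j : ℂ)) / (lam : ℂ) ^ 2) := by
  intro i j
  have hl0 : lam ≠ 0 := by linarith
  set T : ℂ := ((2*π : ℝ) : ℂ)^3 with hTdef
  have hTne : T ≠ 0 := by
    apply pow_ne_zero
    rw [Complex.ofReal_ne_zero]
    positivity
  -- pointwise expansion
  have hprod : ∀ ξ : X3, W ξ i * W ξ j = ∑ k ∈ Λ, ∑ k' ∈ Λ,
      (a k * B k i) * (a k' * B k' j) *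
        Complex.exp (Complex.I * ∑ m, (((k + k') m : ℤ) : ℂ) * (ξ m : ℂ)) := by
    intro ξ
    rw [hW ξ i, hW ξ j, Finset.sum_mul]
    refine Finset.sum_congr rfl fun k _ => ?_
    rw [Finset.mul_sum]
    refine Finset.sum_congr rfl fun k' _ => ?_
    have hE : Complex.exp (Complex.I * ∑ m, (k m : ℂ) * (ξ m : ℂ)) *
        Complex.exp (Complex.I * ∑ m, (k' m : ℂ) * (ξ m : ℂ))
        = Complex.exp (Complex.I * ∑ m, (((k + k') m : ℤ) : ℂ) * (ξ m : ℂ)) := by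
      have harg : (∑ m, (((k + k') m : ℤ) : ℂ) * (ξ m : ℂ))
          = ∑ m, ((k m : ℂ) * (ξ m : ℂ) + (k' m : ℂ) * (ξ m : ℂ)) :=
        Finset.sum_congr rfl fun m _ => by
          simp only [Pi.add_apply]; push_cast; ring
      rw [harg, Finset.sum_add_distrib, ← Complex.exp_add, mul_add]
    rw [← hE]; ring
  -- integrability
  have hcont : ∀ (k : Fin 3 → ℤ),
      Continuous fun ξ : X3 => Complex.exp (Complex.I * ∑ m, ((k m : ℤ) : ℂ) * (ξ m : ℂ)) := by
    intro k
    apply Complex.continuous_exp.comp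
    apply continuous_const.mul
    apply continuous_finset_sum
    intro m _
    exact continuous_const.mul (Complex.continuous_ofReal.comp (continuous_apply m))
  have hint : ∀ (k : Fin 3 → ℤ) (c : ℂ), IntegrableOn
      (fun ξ : X3 => c * Complex.exp (Complex.I * ∑ m, ((k m : ℤ) : ℂ) * (ξ m : ℂ))) cube := by
    intro k c
    exact (continuous_const.mul (hcont k)).integrableOn_Icc
  -- compute the integral
  have key : (∫ ξ in cube, W ξ i * W ξ j) = ∑ k ∈ Λ, ∑ k' ∈ Λ,
      (a k * B k i) * (a k' * B k' j) * (if k + k' = 0 then T else 0) := by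
    simp only [hprod]
    rw [MeasureTheory.integral_finset_sum _
      (fun k _ => integrable_finset_sum _ fun k' _ => hint (k + k') _)]
    refine Finset.sum_congr rfl fun k hk => ?_
    rw [MeasureTheory.integral_finset_sum _ (fun k' _ => hint (k + k') _)]
    refine Finset.sum_congr rfl fun k' hk' => ?_
    rw [MeasureTheory.integral_const_mul, cube_exp_int (k + k')]
  -- collapse the inner sum
  have collapse : ∀ k ∈ Λ, (∑ k' ∈ Λ,
      (a k * B k i) * (a k' * B k' j) * (if k + k' = 0 then T else 0))
      = (a k * B k i) * (a (-k) * B (-k) j) * T := by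
    intro k hk
    rw [Finset.sum_eq_single_of_mem (-k) (hΛsym k hk)]
    · simp
    · intro k' _ hne
      have h0 : ¬(k + k' = 0) := fun hc => hne (eq_neg_of_add_eq_zero_right hc)
      rw [if_neg h0, mul_zero]
  rw [key, Finset.sum_congr rfl collapse, ← Finset.sum_mul]
  have hTcast : ((2 * π) ^ 3 : ℂ) = T := by rw [hTdef]; push_cast; ring
  rw [hTcast, mul_comm, mul_assoc, mul_inv_cancel₀ hTne, mul_one]
  -- now the algebraic identity
  set g : (Fin 3 → ℤ) → ℂ := fun k => (a k * B k i) * (a (-k) * B (-k) j) with hg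
  have hBneg : ∀ k ∈ Λ, ∀ m, B (-k) m = (starRingEnd ℂ) (B k m) := by
    intro k hk m
    rw [hB, hB, hAsym k hk]
    have hcross : crossR (fun j => (((-k) j : ℤ) : ℝ) / lam) (A k) m
        = - crossR (fun j => ((k j : ℤ) : ℝ) / lam) (A k) m := by
      fin_cases m <;> simp [crossR] <;> push_cast <;> ring
    rw [hcross]
    simp only [map_add, map_mul, Complex.conj_ofReal, Complex.conj_I]
    push_cast
    ring
  have hterm : ∀ k ∈ Λ, g k + g (-k) = ((‖a k‖) ^ 2 : ℂ) *
      ((if i = j then (1 : ℂ) else 0) - ((k i : ℂ) * (k j : ℂ)) / (lam : ℂ) ^ 2) := by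
    intro k hk
    have hkk : -k ∈ Λ := hΛsym k hk
    have hanegk : a (-k) = (starRingEnd ℂ) (a k) := (ha k hk).symm
    have hak : a (- -k) = (starRingEnd ℂ) (a (-k)) := by rw [neg_neg, hanegk]; simp
    have hBi := hBneg k hk i
    have hBj := hBneg k hk j
    have hBi' : B (- -k) i = (starRingEnd ℂ) (B (-k) i) := by
      rw [neg_neg, hBi]; simp
    have hBj' : B (- -k) j = (starRingEnd ℂ) (B (-k) j) := by
      rw [neg_neg, hBj]; simp
    have habs : a k * (starRingEnd ℂ) (a k) = ((‖a k‖ : ℝ) : ℂ)^2 := by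
      rw [Complex.mul_conj, Complex.normSq_eq_norm_sq]
      push_cast; ring
    rw [hg]
    simp only [hanegk, hBi, hBj, hBi', hBj', neg_neg]
    -- now everything in terms of a k and B k
    have hre : B k i * (starRingEnd ℂ) (B k j) + (starRingEnd ℂ) (B k i) * B k j
        = ((if i = j then (1 : ℂ) else 0) - ((k i : ℂ) * (k j : ℂ)) / (lam : ℂ) ^ 2) := by
      have hid := tensor_id lam hl0 (A k) (fun m => ((k m : ℤ) : ℝ))
        (hAk k hk) (hAn k hk) (by rw [dotR]; simp only [← sq]; exact hΛlen k hk) i j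
      have hidC : (((A k i) : ℝ) : ℂ) * ((A k j : ℝ) : ℂ) +
          ((crossR (fun m => ((k m : ℤ) : ℝ) / lam) (A k) i : ℝ) : ℂ) *
          ((crossR (fun m => ((k m : ℤ) : ℝ) / lam) (A k) j : ℝ) : ℂ)
          = ((if i = j then (1 : ℂ) else 0) - ((k i : ℂ) * (k j : ℂ)) / (lam : ℂ) ^ 2) / 2 := by
        rw [show ((((A k i) : ℝ) : ℂ) * ((A k j : ℝ) : ℂ) +
            ((crossR (fun m => ((k m : ℤ) : ℝ) / lam) (A k) i : ℝ) : ℂ) *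
            ((crossR (fun m => ((k m : ℤ) : ℝ) / lam) (A k) j : ℝ) : ℂ))
            = ((A k i * A k j + crossR (fun m => ((k m : ℤ) : ℝ) / lam) (A k) i *
                crossR (fun m => ((k m : ℤ) : ℝ) / lam) (A k) j : ℝ) : ℂ) from by
          push_cast; ring]
        rw [hid]
        split_ifs <;> push_cast <;> ring
      rw [hB k i, hB k j]
      simp only [map_add, map_mul, Complex.conj_ofReal, Complex.conj_I]
      linear_combination 2 * hidC - 2 * ((crossR (fun m => ((k m : ℤ) : ℝ) / lam) (A k) i : ℝ) : ℂ)
        * ((crossR (fun m => ((k m : ℤ) : ℝ) / lam) (A k) j : ℝ) : ℂ) * Complex.I_sq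
    calc a k * B k i * ((starRingEnd ℂ) (a k) * (starRingEnd ℂ) (B k j)) +
          (starRingEnd ℂ) (a k) * (starRingEnd ℂ) (B k i) * (a k * B k j)
        = (a k * (starRingEnd ℂ) (a k)) *
            (B k i * (starRingEnd ℂ) (B k j) + (starRingEnd ℂ) (B k i) * B k j) := by ring
      _ = _ := by rw [habs, hre]
  have hsymm : ∑ k ∈ Λ, g k = ∑ k ∈ Λ, g (-k) := by
    refine Finset.sum_equiv (Equiv.neg _) (fun k => ?_) (fun k _ => ?_)
    · constructor
      · intro h; exact hΛsym k h
      · intro h; simpa using hΛsym _ h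
    · simp
  have : (2 : ℂ) * ∑ k ∈ Λ, g k = ∑ k ∈ Λ, (g k + g (-k)) := by
    rw [Finset.sum_add_distrib, ← hsymm]; ring
  have hfinal : ∑ k ∈ Λ, g k = (1/2 : ℂ) * ∑ k ∈ Λ, (g k + g (-k)) := by
    rw [← this]; ring
  rw [hfinal, Finset.sum_congr rfl hterm]

end
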